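/- Let a > 0, x_2 > 3/2, x_1 > 0 and define μ(y) = (a_2/Γ(x_2)) y^{x_2 - 1} - (a_1 x_1/(2√π)) y^{-3/2} exp(-x_1^2/(4y)) for y > 0 with a_1, a_2 > 0. Then μ(y) ≥ 0 for all y > 0 if and only if (x_2 + 1/2)(1 + log(x_1^2/(4x_2 + 2))) ≥ log(a_1 x_1 Γ(x_2)/(2√π a_2)). -/

import Mathlib

/-- Key inequality: the minimum of `s * log y + b / y` over `y > 0` is `s * (1 + log (b/s))`. -/
lemma aux_min_log (s b y : ℝ) (hs : 0 < s) (hb : 0 < b) (hy : 0 < y) :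
    s * (1 + Real.log (b / s)) ≤ s * Real.log y + b / y := by
  set t : ℝ := y * s / b with ht
  have htpos : 0 < t := by positivity
  have hlt : Real.log (1 / t) ≤ 1 / t - 1 :=
    Real.log_le_sub_one_of_pos (by positivity)
  rw [Real.log_div one_ne_zero (ne_of_gt htpos), Real.log_one] at hlt
  have hyeq : y = t * (b / s) := by
    field_simp [ht]
    rw [ht, div_mul_cancel₀ _ (ne_of_gt hb)]
  have hlogy : Real.log y = Real.log t + Real.log (b / s) := by
    rw [hyeq, Real.log_mul (ne_of_gt htpos) (by positivity)]
  have hby : b / y = s / t := by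
    rw [hyeq]
    field_simp
  rw [hlogy, hby]
  have h1 : s / t = s * (1 / t) := by ring
  have h2 : s * (1 - 1/t) ≤ s * Real.log t := by
    apply mul_le_mul_of_nonneg_left _ hs.le
    linarith
  nlinarith [h2]

theorem mu_nonneg_iff (a₁ a₂ x₁ x₂ : ℝ)
    (ha₁ : 0 < a₁) (ha₂ : 0 < a₂) (hx₂ : 3 / 2 < x₂) (hx₁ : 0 < x₁)
    (μ : ℝ → ℝ)
    (hμ : ∀ y, μ y = a₂ / Real.Gamma x₂ * y ^ (x₂ - 1)
        - a₁ * x₁ / (2 * Real.sqrt Real.pi) * y ^ (-(3 : ℝ) / 2)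
          * Real.exp (-x₁ ^ 2 / (4 * y))) :
    (∀ y : ℝ, 0 < y → 0 ≤ μ y) ↔
      Real.log (a₁ * x₁ * Real.Gamma x₂ / (2 * Real.sqrt Real.pi * a₂)) ≤
        (x₂ + 1 / 2) * (1 + Real.log (x₁ ^ 2 / (4 * x₂ + 2))) := by
  have hΓ : 0 < Real.Gamma x₂ := Real.Gamma_pos_of_pos (by linarith)
  have hπ : 0 < Real.sqrt Real.pi := Real.sqrt_pos.mpr Real.pi_pos
  set A : ℝ := a₂ / Real.Gamma x₂ with hAdef
  set B : ℝ := a₁ * x₁ / (2 * Real.sqrt Real.pi) with hBdef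
  set s : ℝ := x₂ + 1 / 2 with hsdef
  set b : ℝ := x₁ ^ 2 / 4 with hbdef
  have hA : 0 < A := by positivity
  have hB : 0 < B := by positivity
  have hs : 0 < s := by simp only [hsdef]; linarith
  have hb : 0 < b := by positivity
  have hlogC : Real.log (a₁ * x₁ * Real.Gamma x₂ / (2 * Real.sqrt Real.pi * a₂)) =
      Real.log B - Real.log A := by
    rw [← Real.log_div (ne_of_gt hB) (ne_of_gt hA)]
    congr 1
    rw [hAdef, hBdef]
    field_simp
  have hequiv : ∀ y : ℝ, 0 < y →
      (0 ≤ μ y ↔ Real.log B - Real.log A ≤ s * Real.log y + b / y) := by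
    intro y hy
    rw [hμ y, sub_nonneg]
    have h1 : (0:ℝ) < y ^ (x₂ - 1) := Real.rpow_pos_of_pos hy _
    have h2 : (0:ℝ) < y ^ (-(3:ℝ) / 2) := Real.rpow_pos_of_pos hy _
    have h3 : (0:ℝ) < B * y ^ (-(3:ℝ)/2) * Real.exp (-x₁ ^ 2 / (4 * y)) := by
      positivity
    rw [← Real.log_le_log_iff h3 (by positivity)]
    rw [Real.log_mul (by positivity) (Real.exp_ne_zero _),
        Real.log_mul (ne_of_gt hB) (ne_of_gt h2),
        Real.log_mul (ne_of_gt hA) (ne_of_gt h1),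
        Real.log_rpow hy, Real.log_rpow hy, Real.log_exp]
    have heq : (Real.log A + (x₂ - 1) * Real.log y) -
        (Real.log B + -(3:ℝ)/2 * Real.log y + -x₁ ^ 2 / (4 * y)) =
        (s * Real.log y + b / y) - (Real.log B - Real.log A) := by
      simp only [hsdef, hbdef]
      field_simp
      ring
    constructor <;> intro h <;> linarith
  have hbs : b / s = x₁ ^ 2 / (4 * x₂ + 2) := by
    simp only [hbdef, hsdef]
    field_simp
    ring
  constructor
  · intro h
    rw [hlogC]
    have hys : 0 < b / s := by positivity
    have := (hequiv (b / s) hys).mp (h _ hys)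
    have hdd : b / (b / s) = s := by
      field_simp
    rw [hdd, hbs] at this
    calc Real.log B - Real.log A ≤ s * Real.log (x₁ ^ 2 / (4 * x₂ + 2)) + s := this
      _ = s * (1 + Real.log (x₁ ^ 2 / (4 * x₂ + 2))) := by ring
  · intro h y hy
    rw [hequiv y hy]
    have hkey := aux_min_log s b y hs hb hy
    rw [hbs] at hkey
    rw [hlogC] at h
    linarith
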